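/- Correctness of CP-ABE final decryption: in prime-order groups with bilinear map e and generator g, for exponents α, β, r, s ∈ ZMod p with β ≠ 0, and any group element M ∈ G_T, letting C̃ = M · e(g,g)^{αs}, C = (g^β)^s, S = g^{(α+r)/β}, and D = e(g,g)^{rs}, we have C̃ · D / e(C, S) = M. -/

import Mathlib

private lemma pow_norm {p : ℕ} [Fact p.Prime] {GT : Type*} [CommGroup GT]
    (x : GT) (hx : x ^ p = 1) (a : ℕ) : x ^ a = x ^ ((a : ZMod p)).val := by
  conv_lhs => rw [← Nat.div_add_mod a p, pow_add, pow_mul, hx, one_pow, one_mul]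
  congr 1
  simp [ZMod.val_natCast]

/-- Correctness of CP-ABE final decryption: with `C̃ = M·e(g,g)^{αs}`, `C = (g^β)^s`,
    `S = g^{(α+r)/β}`, `D = e(g,g)^{rs}`, we have `C̃ · D / e(C,S) = M`.
    Exponents live in `ZMod p` (exponentiation via `.val`), `β ≠ 0`. -/
theorem cpabe_final_decryption (p : ℕ) [Fact p.Prime] (G₁ GT : Type*)
    [CommGroup G₁] [CommGroup GT]
    (hG : ∀ x : G₁, x ^ p = 1) (hT : ∀ x : GT, x ^ p = 1)
    (g : G₁) (e : G₁ → G₁ → GT)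
    (hpow : ∀ (u v : G₁) (a b : ℕ), e (u ^ a) (v ^ b) = (e u v) ^ (a * b))
    (α β r s : ZMod p) (hβ : β ≠ 0) (M : GT) :
    (M * (e g g) ^ (α * s).val) * (e g g) ^ (r * s).val /
        e ((g ^ β.val) ^ s.val) (g ^ ((α + r) * β⁻¹).val) = M := by
  have hgg := hT (e g g)
  rw [← pow_mul, hpow, pow_norm _ hgg (β.val * s.val * _)]
  have h2 : (((β.val * s.val * ((α + r) * β⁻¹).val : ℕ) : ZMod p)) =
      α * s + r * s := by
    push_cast
    simp only [ZMod.natCast_val, ZMod.cast_id]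
    field_simp
  rw [h2]
  rw [mul_assoc, ← pow_add, pow_norm _ hgg ((α*s).val + (r*s).val)]
  have h3 : (((α*s).val + (r*s).val : ℕ) : ZMod p) = α * s + r * s := by push_cast; simp
  rw [h3, div_eq_iff_eq_mul]
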